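/- arXiv:1203.5411 — 3 statements merged into one kernel-verified Lean document; each statement's English description precedes it below -/
import Mathlib

section
/- Let m ≥ 1, p ≥ 0 be integers and α ≥ β > 0 reals with (2m−1)β − 2pα ≥ 0. Then for every r > 0, 1 + (2m−1)βr coth(βr) − 2pαr coth(αr) ≥ 2(m − p α/β). -/
open Real

lemma sinh_le_mul_cosh {x : ℝ} (hx : 0 ≤ x) : Real.sinh x ≤ x * Real.cosh x := by
  have h : MonotoneOn (fun x : ℝ => x * Real.cosh x - Real.sinh x) (Set.Ici 0) := by
    apply monotoneOn_of_deriv_nonneg (convex_Ici 0)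
    · exact ((continuous_id.mul Real.continuous_cosh).sub Real.continuous_sinh).continuousOn
    · intro y _
      exact (((differentiable_id.mul Real.differentiable_cosh).sub
        Real.differentiable_sinh) y).differentiableWithinAt
    · intro y hy
      rw [interior_Ici, Set.mem_Ioi] at hy
      have hd : HasDerivAt (fun x : ℝ => x * Real.cosh x - Real.sinh x)
          (1 * Real.cosh y + y * Real.sinh y - Real.cosh y) y :=
        ((hasDerivAt_id y).mul (Real.hasDerivAt_cosh y)).sub (Real.hasDerivAt_sinh y)
      rw [hd.deriv]
      have := Real.sinh_nonneg_iff.mpr hy.le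
      nlinarith
  have := h (Set.self_mem_Ici) (Set.mem_Ici.mpr hx) hx
  simpa using this

/-- For integers `m ≥ 1`, `p ≥ 0` and reals `α ≥ β > 0` with
`(2m−1)β − 2pα ≥ 0`, one has for every `r > 0`:
`1 + (2m−1)βr coth(βr) − 2pαr coth(αr) ≥ 2(m − p α/β)`. -/
theorem stmt11 (m p : ℕ) (hm : 1 ≤ m) (a b : ℝ) (hb : 0 < b) (hba : b ≤ a)
    (hcond : 0 ≤ (2 * (m : ℝ) - 1) * b - 2 * p * a) :
    ∀ r : ℝ, 0 < r →
      2 * ((m : ℝ) - p * a / b)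
        ≤ 1 + (2 * (m : ℝ) - 1) * b * r * (Real.cosh (b * r) / Real.sinh (b * r))
            - 2 * p * a * r * (Real.cosh (a * r) / Real.sinh (a * r)) := by
  intro r hr
  have hbr : 0 < b * r := mul_pos hb hr
  have har : 0 < a * r := mul_pos (hb.trans_le hba) hr
  have hsb : 0 < Real.sinh (b * r) := Real.sinh_pos_iff.mpr hbr
  have hsa : 0 < Real.sinh (a * r) := Real.sinh_pos_iff.mpr har
  set cb := Real.cosh (b * r) / Real.sinh (b * r) with hcb
  set ca := Real.cosh (a * r) / Real.sinh (a * r) with hca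
  -- coth is decreasing: ca ≤ cb
  have hcoth : ca ≤ cb := by
    rw [hca, hcb, div_le_div_iff₀ hsa hsb]
    have := Real.sinh_nonneg_iff.mpr (by nlinarith : (0:ℝ) ≤ a * r - b * r)
    rw [Real.sinh_sub] at this
    nlinarith
  -- b * r * cb ≥ 1
  have h1 : 1 ≤ b * r * cb := by
    rw [hcb, ← mul_div_assoc, le_div_iff₀ hsb, one_mul]
    have := sinh_le_mul_cosh hbr.le
    linarith
  have hca_pos : 0 < ca := div_pos (Real.cosh_pos _) hsa
  have hcb_pos : 0 < cb := div_pos (Real.cosh_pos _) hsb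
  have hp : (0:ℝ) ≤ p := Nat.cast_nonneg p
  have ha : 0 < a := hb.trans_le hba
  -- key: LHS' := (2m-1)*b*r*cb - 2p*a*r*ca ≥ ((2m-1)b - 2pa) r cb ≥ ((2m-1)b-2pa)/b
  have step1 : ((2 * (m : ℝ) - 1) * b - 2 * p * a) * r * cb
      ≤ (2 * (m : ℝ) - 1) * b * r * cb - 2 * p * a * r * ca := by
    have : 2 * (p:ℝ) * a * r * ca ≤ 2 * p * a * r * cb := by
      have h2 : 0 ≤ 2 * (p:ℝ) * a * r := by positivity
      exact mul_le_mul_of_nonneg_left hcoth h2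
    nlinarith
  have step2 : ((2 * (m : ℝ) - 1) * b - 2 * p * a) / b
      ≤ ((2 * (m : ℝ) - 1) * b - 2 * p * a) * r * cb := by
    have hrcb : 1 / b ≤ r * cb := by
      rw [div_le_iff₀ hb]
      nlinarith
    calc ((2 * (m : ℝ) - 1) * b - 2 * p * a) / b
        = ((2 * (m : ℝ) - 1) * b - 2 * p * a) * (1 / b) := by ring
      _ ≤ ((2 * (m : ℝ) - 1) * b - 2 * p * a) * (r * cb) :=
          mul_le_mul_of_nonneg_left hrcb hcond
      _ = ((2 * (m : ℝ) - 1) * b - 2 * p * a) * r * cb := by ring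
  have hfinal : 2 * ((m : ℝ) - p * a / b) = 1 + ((2 * (m : ℝ) - 1) * b - 2 * p * a) / b := by
    field_simp
    ring
  linarith
end

section
/- Let a ≥ 0, b² ∈ [0, 1/4], m ≥ 2, p ≥ 1 be such that 2 + (m−2)(1+√(1−4b²)) − (2p−1)(1+√(1+4a²)) > 0. Then the constant λ = [2 + (m−1)(1+√(1−4b²)) − 2p(1+√(1+4a²))]/2 satisfies: for any symmetric bilinear form H with (c₁/r)(g − dr⊗dr) ≤ H ≤ (c₂/r)(g − dr⊗dr) where c₁ = (1+√(1−4b²))/2, c₂ = (1+√(1+4a²))/2, the eigenvalues μ₁ ≤ ... ≤ μ_m of 2dr⊗dr + 2rH satisfy Σμ_i − 2p μ_m ≥ 2λ. -/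
open Matrix
open scoped RealInnerProductSpace

/-- Let `a ≥ 0`, `b² ∈ [0,1/4]`, `m ≥ 2`, `p ≥ 1` with
`2 + (m−2)(1+√(1−4b²)) − (2p−1)(1+√(1+4a²)) > 0`, and set
`c₁ = (1+√(1−4b²))/2`, `c₂ = (1+√(1+4a²))/2`,
`λ = [2 + (m−1)(1+√(1−4b²)) − 2p(1+√(1+4a²))]/2`. If `H` is a symmetric bilinear form
with `H(u) = 0` for the unit covector direction `u` and
`(c₁/r)(g − dr⊗dr) ≤ H ≤ (c₂/r)(g − dr⊗dr)`, then the eigenvalues `μ₁ ≤ ⋯ ≤ μ_m` of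
`2 dr⊗dr + 2r H` satisfy `∑ μᵢ − 2p μ_m ≥ 2λ`. -/
theorem stmt12 (m p : ℕ) (hm : 2 ≤ m) (hp : 1 ≤ p)
    (a b2 : ℝ) (ha : 0 ≤ a) (hb2 : b2 ∈ Set.Icc (0 : ℝ) (1 / 4))
    (hcond : 0 < 2 + ((m : ℝ) - 2) * (1 + Real.sqrt (1 - 4 * b2))
        - (2 * (p : ℝ) - 1) * (1 + Real.sqrt (1 + 4 * a ^ 2)))
    (r : ℝ) (hr : 0 < r)
    (u : Fin m → ℝ) (hu : u ⬝ᵥ u = 1)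
    (H : Matrix (Fin m) (Fin m) ℝ) (hHsymm : H.IsSymm) (hHu : H.mulVec u = 0)
    (hlow : ∀ v : Fin m → ℝ,
      ((1 + Real.sqrt (1 - 4 * b2)) / 2) / r * (v ⬝ᵥ v - (u ⬝ᵥ v) ^ 2) ≤ v ⬝ᵥ H.mulVec v)
    (hupp : ∀ v : Fin m → ℝ,
      v ⬝ᵥ H.mulVec v ≤ ((1 + Real.sqrt (1 + 4 * a ^ 2)) / 2) / r * (v ⬝ᵥ v - (u ⬝ᵥ v) ^ 2))
    (hA : ((2 : ℝ) • vecMulVec u u + (2 * r) • H).IsHermitian) :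
    2 * ((2 + ((m : ℝ) - 1) * (1 + Real.sqrt (1 - 4 * b2))
        - 2 * p * (1 + Real.sqrt (1 + 4 * a ^ 2))) / 2)
      ≤ (∑ i, hA.eigenvalues i)
        - 2 * p * (Finset.univ.sup'
            (Finset.univ_nonempty_iff.mpr ⟨⟨0, by omega⟩⟩) hA.eigenvalues) := by
  set s1 := Real.sqrt (1 - 4 * b2) with hs1
  set s2 := Real.sqrt (1 + 4 * a ^ 2) with hs2
  set A := (2 : ℝ) • vecMulVec u u + (2 * r) • H with hAdef
  have hs1nn : 0 ≤ s1 := Real.sqrt_nonneg _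
  have hs2one : 1 ≤ s2 := by
    rw [hs2]
    nlinarith [Real.sq_sqrt (by positivity : (0:ℝ) ≤ 1 + 4 * a ^ 2),
      Real.sqrt_nonneg (1 + 4 * a ^ 2)]
  -- quadratic form of A
  have hquad : ∀ v : Fin m → ℝ,
      v ⬝ᵥ A *ᵥ v = 2 * (u ⬝ᵥ v) ^ 2 + 2 * r * (v ⬝ᵥ H.mulVec v) := by
    intro v
    have h1 : v ⬝ᵥ (vecMulVec u u *ᵥ v) = (u ⬝ᵥ v) ^ 2 := by
      simp only [vecMulVec, Matrix.mulVec, dotProduct, of_apply]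
      rw [sq]
      simp only [Finset.mul_sum, Finset.sum_mul]
      rw [Finset.sum_comm]
      congr 1; ext i; congr 1; ext j; ring
    rw [hAdef, Matrix.add_mulVec, Matrix.smul_mulVec, Matrix.smul_mulVec,
      dotProduct_add, dotProduct_smul, dotProduct_smul, h1]
    simp only [smul_eq_mul]
  -- sum of eigenvalues equals trace
  have htr : ∑ i, hA.eigenvalues i = A.trace := by
    rw [hA.trace_eq_sum_eigenvalues]
    simp
  -- lower bound on trace
  have hsum : 2 + ((m : ℝ) - 1) * (1 + s1) ≤ ∑ i, hA.eigenvalues i := by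
    rw [htr]
    have hdiag : ∀ i : Fin m, 2 * u i ^ 2 + 2 * r * (((1 + s1) / 2) / r * (1 - u i ^ 2))
        ≤ A.diag i := by
      intro i
      have := hlow (Pi.single i 1)
      simp only [single_dotProduct, dotProduct_single, one_mul, mul_one] at this
      have hHi : ((1 + s1) / 2) / r * (1 - u i ^ 2) ≤ H i i := by
        simpa [Matrix.mulVec_single] using this
      have hAi : A.diag i = 2 * u i ^ 2 + 2 * r * H i i := by
        simp [hAdef, Matrix.diag, vecMulVec, sq]
      rw [hAi]
      nlinarith [hr]
    have hsq : ∑ i : Fin m, u i ^ 2 = 1 := by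
      simpa [dotProduct, sq] using hu
    have hrr : (r : ℝ) ≠ 0 := ne_of_gt hr
    have e1 : ∑ i : Fin m, 2 * u i ^ 2 = 2 := by
      rw [← Finset.mul_sum, hsq, mul_one]
    have e2 : ∑ i : Fin m, (1 + s1) * (1 - u i ^ 2) = (1 + s1) * ((m : ℝ) - 1) := by
      rw [← Finset.mul_sum]
      congr 1
      rw [Finset.sum_sub_distrib, hsq]
      simp
    calc 2 + ((m : ℝ) - 1) * (1 + s1)
        = ∑ i : Fin m, (2 * u i ^ 2 + (1 + s1) * (1 - u i ^ 2)) := by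
          rw [Finset.sum_add_distrib, e1, e2]; ring
      _ = ∑ i : Fin m, (2 * u i ^ 2 + 2 * r * (((1 + s1) / 2) / r * (1 - u i ^ 2))) :=
          Finset.sum_congr rfl fun i _ => by field_simp
      _ ≤ ∑ i, A.diag i := Finset.sum_le_sum fun i _ => hdiag i
      _ = A.trace := rfl
  -- upper bound on each eigenvalue
  have hmax : ∀ i : Fin m, hA.eigenvalues i ≤ 1 + s2 := by
    intro i
    set v : Fin m → ℝ := fun j => (hA.eigenvectorBasis i) j with hv
    have hvv : v ⬝ᵥ v = 1 := by
      have h1 := hA.eigenvectorBasis.orthonormal.1 i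
      have h2 : ⟪(hA.eigenvectorBasis i), (hA.eigenvectorBasis i)⟫ = 1 := by
        rw [real_inner_self_eq_norm_sq, h1]; norm_num
      rw [PiLp.inner_apply] at h2
      simpa [dotProduct, hv, sq] using h2
    have heig : hA.eigenvalues i = v ⬝ᵥ A *ᵥ v := by
      have := hA.eigenvalues_eq i
      simpa [hv] using this
    have hHv := hupp v
    rw [heig, hquad v]
    rw [hvv] at hHv
    have h2r : 2 * r * (v ⬝ᵥ H.mulVec v) ≤ (1 + s2) * (1 - (u ⬝ᵥ v) ^ 2) := by
      have := mul_le_mul_of_nonneg_left hHv (by linarith : (0:ℝ) ≤ 2 * r)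
      calc 2 * r * (v ⬝ᵥ H.mulVec v) ≤ 2 * r * ((1 + s2) / 2 / r * (1 - (u ⬝ᵥ v) ^ 2)) := this
        _ = (1 + s2) * (1 - (u ⬝ᵥ v) ^ 2) := by
            field_simp
    nlinarith [sq_nonneg (u ⬝ᵥ v)]
  have hsup : (Finset.univ.sup'
      (Finset.univ_nonempty_iff.mpr ⟨⟨0, by omega⟩⟩) hA.eigenvalues) ≤ 1 + s2 :=
    Finset.sup'_le _ _ fun i _ => hmax i
  have hpp : (1 : ℝ) ≤ (p : ℝ) := by exact_mod_cast hp
  nlinarith [mul_le_mul_of_nonneg_left hsup (by linarith : (0:ℝ) ≤ 2 * (p : ℝ))]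
end

section
/- Let M be an isotropic submanifold of dimension m ≥ 2 in a Riemannian manifold, i.e. |A(e,e)| is independent of the unit tangent vector e at each point. Then for every unit tangent vector ν, ||i_ν A||² ≤ ||A||²/2, where ||i_ν A||² = Σ_j |A(ν, e_j)|² for an orthonormal frame {e_j} and ||A||² = Σ_{i,j} |A(e_i,e_j)|². -/
open Finset RealInnerProductSpace

private lemma sum_norm_sq_basis_indep {V W : Type*} [NormedAddCommGroup V]
    [InnerProductSpace ℝ V] [NormedAddCommGroup W] [InnerProductSpace ℝ W]
    {m : ℕ} (T : V →ₗ[ℝ] W) (e f : OrthonormalBasis (Fin m) ℝ V) :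
    ∑ j, ‖T (e j)‖ ^ 2 = ∑ j, ‖T (f j)‖ ^ 2 := by
  have h1 : ∀ j, ‖T (e j)‖ ^ 2
      = ∑ k, ∑ l, ⟪f k, e j⟫ * ⟪f l, e j⟫ * ⟪T (f k), T (f l)⟫ := by
    intro j
    have hx : T (e j) = ∑ k, ⟪f k, e j⟫ • T (f k) := by
      conv_lhs => rw [← f.sum_repr' (e j)]
      simp [map_sum, map_smul]
    rw [← real_inner_self_eq_norm_sq, hx, sum_inner]
    refine Finset.sum_congr rfl fun k _ => ?_
    rw [inner_sum]
    refine Finset.sum_congr rfl fun l _ => ?_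
    rw [real_inner_smul_left, real_inner_smul_right]
    ring
  calc ∑ j, ‖T (e j)‖ ^ 2
      = ∑ k, ∑ l, (∑ j, ⟪f k, e j⟫ * ⟪e j, f l⟫) * ⟪T (f k), T (f l)⟫ := by
        simp only [h1]
        rw [Finset.sum_comm]
        refine Finset.sum_congr rfl fun k _ => ?_
        rw [Finset.sum_comm]
        refine Finset.sum_congr rfl fun l _ => ?_
        rw [Finset.sum_mul]
        refine Finset.sum_congr rfl fun j _ => ?_
        rw [real_inner_comm (e j) (f l)]
    _ = ∑ k, ∑ l, ⟪f k, f l⟫ * ⟪T (f k), T (f l)⟫ := by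
        refine Finset.sum_congr rfl fun k _ => Finset.sum_congr rfl fun l _ => ?_
        rw [e.sum_inner_mul_inner]
    _ = ∑ k, ‖T (f k)‖ ^ 2 := by
        refine Finset.sum_congr rfl fun k _ => ?_
        rw [Finset.sum_eq_single k]
        · rw [(orthonormal_iff_ite.mp f.orthonormal k k)]
          simp [real_inner_self_eq_norm_sq]
        · intro l _ hl
          rw [(orthonormal_iff_ite.mp f.orthonormal k l)]
          simp [Ne.symm hl]
        · simp

/-- If `A` is the (symmetric, vector-valued) second fundamental form of an
isotropic submanifold of dimension `m ≥ 2` (i.e. `‖A(e,e)‖` is independent of the unit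
vector `e`), then for every unit tangent vector `ν`,
`‖i_ν A‖² = ∑ⱼ ‖A(ν,eⱼ)‖² ≤ (1/2) ∑_{i,j} ‖A(eᵢ,eⱼ)‖² = ‖A‖²/2`. -/
theorem stmt16 {V W : Type*} [NormedAddCommGroup V] [InnerProductSpace ℝ V]
    [NormedAddCommGroup W] [InnerProductSpace ℝ W]
    (m : ℕ) (hm : 2 ≤ m) (e : OrthonormalBasis (Fin m) ℝ V)
    (A : V →ₗ[ℝ] V →ₗ[ℝ] W)
    (hsymm : ∀ X Y : V, A X Y = A Y X)
    (hiso : ∀ u v : V, ‖u‖ = 1 → ‖v‖ = 1 → ‖A u u‖ = ‖A v v‖) :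
    ∀ ν : V, ‖ν‖ = 1 →
      ∑ j, ‖A ν (e j)‖ ^ 2 ≤ (∑ i, ∑ j, ‖A (e i) (e j)‖ ^ 2) / 2 := by
  intro ν hν
  haveI : NeZero m := ⟨by omega⟩
  have : FiniteDimensional ℝ V := Module.Finite.of_basis e.toBasis
  have hrank : Module.finrank ℝ V = Fintype.card (Fin m) := by
    rw [Module.finrank_eq_card_basis e.toBasis]
  -- extend ν to an orthonormal basis f with f 0 = ν
  have horth : Orthonormal ℝ (({0} : Set (Fin m)).restrict (fun _ => ν)) := by
    constructor
    · intro i; exact hν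
    · intro i j hij
      exact absurd (Subsingleton.elim i j) hij
  obtain ⟨f, hf⟩ := horth.exists_orthonormalBasis_extension_of_card_eq hrank
  have hf0 : f 0 = ν := hf 0 rfl
  have hunit : ∀ i, ‖f i‖ = 1 := fun i => f.orthonormal.1 i
  -- rewrite both sides in terms of f
  have hL : ∑ j, ‖A ν (e j)‖ ^ 2 = ∑ j, ‖A (f 0) (f j)‖ ^ 2 := by
    rw [hf0]; exact sum_norm_sq_basis_indep (A ν) e f
  have hR : ∑ i, ∑ j, ‖A (e i) (e j)‖ ^ 2 = ∑ i, ∑ j, ‖A (f i) (f j)‖ ^ 2 := by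
    calc ∑ i, ∑ j, ‖A (e i) (e j)‖ ^ 2
        = ∑ i, ∑ j, ‖A (e i) (f j)‖ ^ 2 :=
          Finset.sum_congr rfl fun i _ => sum_norm_sq_basis_indep (A (e i)) e f
      _ = ∑ j, ∑ i, ‖A (f j) (e i)‖ ^ 2 := by
          rw [Finset.sum_comm]
          exact Finset.sum_congr rfl fun j _ => Finset.sum_congr rfl fun i _ => by
            rw [hsymm]
      _ = ∑ i, ∑ j, ‖A (f i) (f j)‖ ^ 2 :=
          Finset.sum_congr rfl fun j _ => sum_norm_sq_basis_indep (A (f j)) e f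
  rw [hL, hR, le_div_iff₀ (by norm_num : (0:ℝ) < 2)]
  -- now pure inequality for the basis f
  set L := ∑ j, ‖A (f 0) (f j)‖ ^ 2 with hLdef
  set d := ‖A (f 0) (f 0)‖ ^ 2 with hd
  have key : ∀ i : Fin m, i ≠ 0 →
      ‖A (f i) (f 0)‖ ^ 2 + d ≤ ∑ j, ‖A (f i) (f j)‖ ^ 2 := by
    intro i hi
    have hdi : ‖A (f i) (f i)‖ ^ 2 = d := by
      rw [hd, hiso (f i) (f 0) (hunit i) (hunit 0)]
    have hsub : ({0, i} : Finset (Fin m)) ⊆ Finset.univ := Finset.subset_univ _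
    have := Finset.sum_le_sum_of_subset_of_nonneg hsub
      (fun j _ _ => by positivity : ∀ j ∈ Finset.univ, j ∉ ({0, i} : Finset (Fin m)) →
        (0:ℝ) ≤ ‖A (f i) (f j)‖ ^ 2)
    calc ‖A (f i) (f 0)‖ ^ 2 + d
        = ∑ j ∈ ({0, i} : Finset (Fin m)), ‖A (f i) (f j)‖ ^ 2 := by
          rw [Finset.sum_pair (Ne.symm hi), hdi]
      _ ≤ ∑ j, ‖A (f i) (f j)‖ ^ 2 := this
  have hκ : (1 : Fin m) ≠ 0 := by
    have : (1:ℕ) < m := hm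
    simp [Fin.ext_iff, Fin.val_one, Nat.mod_eq_of_lt this]
  have hstep : ∑ i ∈ (Finset.univ.erase (0 : Fin m)), (‖A (f i) (f 0)‖ ^ 2 + d)
      ≤ ∑ i ∈ (Finset.univ.erase (0 : Fin m)), ∑ j, ‖A (f i) (f j)‖ ^ 2 :=
    Finset.sum_le_sum fun i hi => key i (Finset.mem_erase.mp hi).1
  have hsplit : ∑ i, ∑ j, ‖A (f i) (f j)‖ ^ 2
      = L + ∑ i ∈ (Finset.univ.erase (0 : Fin m)), ∑ j, ‖A (f i) (f j)‖ ^ 2 := by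
    rw [hLdef, ← Finset.add_sum_erase _ _ (Finset.mem_univ 0)]
  have hcol : ∑ i ∈ (Finset.univ.erase (0 : Fin m)), ‖A (f i) (f 0)‖ ^ 2 = L - d := by
    have : L = d + ∑ i ∈ (Finset.univ.erase (0 : Fin m)), ‖A (f 0) (f i)‖ ^ 2 := by
      rw [hLdef, hd, ← Finset.add_sum_erase _ _ (Finset.mem_univ 0)]
    rw [this]
    have : ∀ i, ‖A (f i) (f 0)‖ ^ 2 = ‖A (f 0) (f i)‖ ^ 2 := fun i => by rw [hsymm]
    simp [this]
  have hdsum : d ≤ ∑ i ∈ (Finset.univ.erase (0 : Fin m)), d := by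
    have h1 : (1 : Fin m) ∈ (Finset.univ.erase (0 : Fin m)) := by
      simp [Finset.mem_erase, hκ]
    calc d = (fun _ : Fin m => d) 1 := rfl
      _ ≤ ∑ i ∈ (Finset.univ.erase (0 : Fin m)), d :=
        Finset.single_le_sum (f := fun _ : Fin m => d) (fun i _ => by positivity) h1
  have : L + L ≤ L + ∑ i ∈ (Finset.univ.erase (0 : Fin m)), ∑ j, ‖A (f i) (f j)‖ ^ 2 := by
    have h2 : L ≤ ∑ i ∈ (Finset.univ.erase (0 : Fin m)), (‖A (f i) (f 0)‖ ^ 2 + d) := by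
      rw [Finset.sum_add_distrib, hcol]
      linarith
    linarith
  rw [hsplit]
  linarith
end
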